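/- Suppose that for every multipartite graph with maximum degree Δ, local degree at most γΔ, and parts of size at least (1+ε)Δ there exists an independent transversal. Then for any n graphs H_1,...,H_n on a common vertex set V, each of maximum degree at most Δ, with n ≥ (1+ε)Δ, there is a partition V = I_1 ∪ ... ∪ I_n such that I_i is an independent set in H_i for every i. (In this application the constructed multipartite graph has local degree 0, since no edges join distinct copies of the same vertex's part beyond within a single index.) -/

import Mathlib

/-- Application of the main theorem: if every multipartite graph with maximum degree
at most Δ, local degree at most γΔ and parts of size at least (1+ε)Δ admits an
independent transversal, then for any n ≥ (1+ε)Δ graphs H_1,…,H_n on a common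
vertex set V, each of maximum degree at most Δ, V can be partitioned as
V = I_1 ∪ … ∪ I_n with I_i independent in H_i (given via the index assignment g). -/
theorem stmt_9 (Δ n : ℕ) (ε γ : ℝ) (hε : 0 < ε) (hγ : 0 ≤ γ)
    (hγΔ : (1 : ℝ) ≤ γ * Δ)
    (hyp : ∀ (U κ : Type) [Finite U] (G : SimpleGraph U) (P : κ → Set U),
      (∀ u, ∃! i, u ∈ P i) →
      (∀ u, (G.neighborSet u).ncard ≤ Δ) →
      (∀ (u : U) (i : κ), u ∉ P i → ((G.neighborSet u ∩ P i).ncard : ℝ) ≤ γ * Δ) →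
      (∀ i, (1 + ε) * Δ ≤ ((P i).ncard : ℝ)) →
      ∃ f : κ → U, (∀ i, f i ∈ P i) ∧ ∀ i j, i ≠ j → ¬ G.Adj (f i) (f j))
    (V : Type) [Finite V] (H : Fin n → SimpleGraph V)
    (hdeg : ∀ i v, ((H i).neighborSet v).ncard ≤ Δ)
    (hn : (1 + ε) * Δ ≤ (n : ℝ)) :
    ∃ g : V → Fin n, ∀ v w : V, v ≠ w → g v = g w → ¬ (H (g v)).Adj v w := by
  classical
  set G : SimpleGraph (V × Fin n) :=
    { Adj := fun a b => a.2 = b.2 ∧ (H a.2).Adj a.1 b.1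
      symm := by
        refine ⟨?_⟩
        rintro ⟨v, i⟩ ⟨w, j⟩ ⟨rfl, h⟩
        exact ⟨rfl, h.symm⟩
      loopless := by
        refine ⟨?_⟩
        rintro ⟨v, i⟩ ⟨-, h⟩
        exact (H i).irrefl h } with hG
  set P : V → Set (V × Fin n) := fun v => {u | u.1 = v} with hP
  have hpart : ∀ u : V × Fin n, ∃! v, u ∈ P v := by
    intro u
    exact ⟨u.1, rfl, fun v hv => hv.symm⟩
  have hnbr : ∀ u : V × Fin n,
      G.neighborSet u = (fun w => (w, u.2)) '' ((H u.2).neighborSet u.1) := by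
    rintro ⟨v, i⟩
    ext ⟨w, j⟩
    constructor
    · rintro ⟨hj, h⟩
      exact ⟨w, h, by cases hj; rfl⟩
    · rintro ⟨w', h, heq⟩
      obtain ⟨rfl, rfl⟩ := Prod.mk.injEq .. ▸ heq
      exact ⟨rfl, h⟩
  have hdeg' : ∀ u : V × Fin n, (G.neighborSet u).ncard ≤ Δ := by
    intro u
    rw [hnbr u, Set.ncard_image_of_injective _ (fun a b h => (Prod.mk.injEq .. ▸ h).1)]
    exact hdeg u.2 u.1
  have hloc : ∀ (u : V × Fin n) (v : V), u ∉ P v →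
      ((G.neighborSet u ∩ P v).ncard : ℝ) ≤ γ * Δ := by
    intro u v _
    have hsub : G.neighborSet u ∩ P v ⊆ {(v, u.2)} := by
      rintro ⟨w, j⟩ ⟨⟨hj, -⟩, (hw : w = v)⟩
      subst hw
      show (w, j) = (w, u.2)
      exact congrArg _ hj.symm
    calc ((G.neighborSet u ∩ P v).ncard : ℝ)
        ≤ (({(v, u.2)} : Set (V × Fin n)).ncard : ℝ) := by
          exact_mod_cast Set.ncard_le_ncard hsub (Set.finite_singleton _)
      _ = 1 := by simp
      _ ≤ γ * Δ := hγΔ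
  have hsize : ∀ v : V, (1 + ε) * Δ ≤ ((P v).ncard : ℝ) := by
    intro v
    have : P v = (fun j : Fin n => (v, j)) '' Set.univ := by
      ext ⟨w, j⟩
      simp [hP, eq_comm]
    rw [this, Set.ncard_image_of_injective _ (fun a b h => (Prod.mk.injEq .. ▸ h).2),
      Set.ncard_univ, Nat.card_eq_fintype_card, Fintype.card_fin]
    exact hn
  obtain ⟨f, hf1, hf2⟩ := hyp (V × Fin n) V G P hpart hdeg' hloc hsize
  refine ⟨fun v => (f v).2, fun v w hvw heq hadj => ?_⟩
  have hv : (f v).1 = v := hf1 v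
  have hw : (f w).1 = w := hf1 w
  exact hf2 v w hvw ⟨heq, by rwa [hv, hw]⟩
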